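/- The two convex relaxations of the TV model are equivalent: (i) if (x̂, ℓ̂, f̂, v̂) minimizes K(x, v) over all x ∈ A_{d+1}^N, ℓ, f ∈ ℝ^E, v ∈ ℝ^N with Q(x_n, x_m, v_n, v_m, f_{(n,m)}, ℓ_{(n,m)}) ⪰ 0 for all (n,m) ∈ E, then (x̂, v̂) minimizes K(x, v) over all x ∈ A_{d+1}^N, v ∈ ℝ^N with V(x_n, v_n) ⪰ 0 for all n ∈ V; (ii) conversely, if (x̂, v̂) minimizes the latter problem, then (x̂, (η(x̂_n, x̂_m))_{(n,m)∈E}, (⟨x̂_n, x̂_m⟩)_{(n,m)∈E}, v̂) minimizes the former (assuming in (i) that G is connected so every vertex lies on an edge). -/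

import Mathlib

open Finset Matrix

/-- The Minkowski bilinear form on `ℝ^{d+1}`. -/
noncomputable def minkowski {d : ℕ} (x y : Fin (d+1) → ℝ) : ℝ :=
  (∑ i : Fin d, x i.castSucc * y i.castSucc) - x (Fin.last d) * y (Fin.last d)

/-- `ξ̃ = (ξ_1, …, ξ_d, −ξ_{d+1})`. -/
def tilde {d : ℕ} (x : Fin (d+1) → ℝ) : Fin (d+1) → ℝ :=
  fun i => if i = Fin.last d then -x i else x i

/-- The symmetric `(d+5)×(d+5)` block matrix `Q`. -/
noncomputable def Qmat {d : ℕ} (xn xm : Fin (d+1) → ℝ) (vn vm f l : ℝ) :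
    Matrix (Fin (d+1+4)) (Fin (d+1+4)) ℝ :=
  Matrix.reindex finSumFinEquiv finSumFinEquiv
    (Matrix.fromBlocks 1 (Matrix.of fun i j => ![xn, tilde xn, xm, tilde xm] j i)
      (Matrix.of fun i j => ![xn, tilde xn, xm, tilde xm] i j)
      !![vn, -1, f, l; -1, vn, l, f; f, l, vm, -1; l, f, -1, vm])

/-- The symmetric `(d+3)×(d+3)` block matrix `V`. -/
noncomputable def Vmat {d : ℕ} (x : Fin (d+1) → ℝ) (v : ℝ) :
    Matrix (Fin (d+1+2)) (Fin (d+1+2)) ℝ :=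
  Matrix.reindex finSumFinEquiv finSumFinEquiv
    (Matrix.fromBlocks 1 (Matrix.of fun i j => ![x, tilde x] j i)
      (Matrix.of fun i j => ![x, tilde x] i j)
      !![v, -1; -1, v])

/-- The TV objective `K(x,v) = (1/2) Σ_{n∈V} (v_n − 2⟨x_n,y_n⟩) + μ Σ_{(n,m)∈E} ‖x_n − x_m‖₁`. -/
noncomputable def Kfun {N d : ℕ} (E : Finset (Fin N × Fin N))
    (y : Fin N → Fin (d+1) → ℝ) (mu : ℝ)
    (x : Fin N → Fin (d+1) → ℝ) (v : Fin N → ℝ) : ℝ :=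
  (1/2) * ∑ n, (v n - 2 * ∑ i, x n i * y n i)
    + mu * ∑ e ∈ E, ∑ i, |x e.1 i - x e.2 i|

/-- Feasibility for the edge-based relaxation: all `x_n ∈ A_{d+1}` and all
edge matrices `Q ⪰ 0`. -/
def FeasQ {N d : ℕ} (E : Finset (Fin N × Fin N)) (x : Fin N → Fin (d+1) → ℝ)
    (l f : Fin N × Fin N → ℝ) (v : Fin N → ℝ) : Prop :=
  (∀ n, 1 ≤ x n (Fin.last d)) ∧
    ∀ e ∈ E, (Qmat (x e.1) (x e.2) (v e.1) (v e.2) (f e) (l e)).PosSemidef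

/-- Feasibility for the vertex-based relaxation: all `x_n ∈ A_{d+1}` and all
vertex matrices `V ⪰ 0`. -/
def FeasV {N d : ℕ} (x : Fin N → Fin (d+1) → ℝ) (v : Fin N → ℝ) : Prop :=
  (∀ n, 1 ≤ x n (Fin.last d)) ∧ ∀ n, (Vmat (x n) (v n)).PosSemidef

lemma minkowski_comm {d : ℕ} (x y : Fin (d+1) → ℝ) : minkowski x y = minkowski y x := by
  simp [minkowski, mul_comm]

lemma dot_tilde {d : ℕ} (x y : Fin (d+1) → ℝ) :
    ∑ i, x i * tilde y i = minkowski x y := by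
  have h : ∀ i : Fin d, tilde y i.castSucc = y i.castSucc :=
    fun i => if_neg (Fin.castSucc_lt_last i).ne
  have h2 : tilde y (Fin.last d) = -y (Fin.last d) := if_pos rfl
  rw [Fin.sum_univ_castSucc, minkowski, Finset.sum_congr rfl (fun i _ => by rw [h i]), h2]
  ring

lemma tilde_dot {d : ℕ} (x y : Fin (d+1) → ℝ) :
    ∑ i, tilde x i * y i = minkowski x y := by
  rw [Finset.sum_congr rfl (fun i _ => show tilde x i * y i = x i * tilde y i by
    by_cases h : i = Fin.last d <;> simp [tilde, h]), dot_tilde]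

lemma tilde_dot_tilde {d : ℕ} (x y : Fin (d+1) → ℝ) :
    ∑ i, tilde x i * tilde y i = ∑ i, x i * y i := by
  apply Finset.sum_congr rfl
  intro i _
  by_cases h : i = Fin.last d <;> simp [tilde, h]

lemma block_psd_iff {d k : ℕ} (B : Matrix (Fin k) (Fin (d+1)) ℝ) (D : Matrix (Fin k) (Fin k) ℝ) :
    (Matrix.reindex finSumFinEquiv finSumFinEquiv
      (Matrix.fromBlocks (1 : Matrix (Fin (d+1)) (Fin (d+1)) ℝ) Bᵀ B D)).PosSemidef ↔
      (D - B * Bᵀ).PosSemidef := by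
  rw [Matrix.reindex_apply, Matrix.posSemidef_submatrix_equiv]
  have hB : Bᵀᴴ = B := by ext i j; simp [Matrix.conjTranspose_apply]
  rw [show Matrix.fromBlocks (1 : Matrix (Fin (d+1)) (Fin (d+1)) ℝ) Bᵀ B D
      = Matrix.fromBlocks 1 Bᵀ Bᵀᴴ D by rw [hB]]
  haveI : Invertible (1 : Matrix (Fin (d+1)) (Fin (d+1)) ℝ) := invertibleOne
  rw [Matrix.PosDef.fromBlocks₁₁ _ _ Matrix.PosDef.one, inv_one, Matrix.mul_one, hB]

lemma two_psd_iff (a b : ℝ) :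
    (!![a, b; b, a] : Matrix (Fin 2) (Fin 2) ℝ).PosSemidef ↔ 0 ≤ a + b ∧ 0 ≤ a - b := by
  constructor
  · intro h
    have h1 := h.dotProduct_mulVec_nonneg ![1, 1]
    have h2 := h.dotProduct_mulVec_nonneg ![1, -1]
    simp [dotProduct, Matrix.mulVec, Fin.sum_univ_succ] at h1 h2
    constructor <;> linarith
  · rintro ⟨h1, h2⟩
    rw [Matrix.posSemidef_iff_dotProduct_mulVec]
    constructor
    · ext i j
      fin_cases i <;> fin_cases j <;> simp [Matrix.conjTranspose_apply]
    · intro w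
      have : (star w) ⬝ᵥ (!![a, b; b, a] : Matrix (Fin 2) (Fin 2) ℝ) *ᵥ w
          = a * (w 0 * w 0) + b * (w 0 * w 1) + (b * (w 1 * w 0) + a * (w 1 * w 1)) := by
        simp [dotProduct, Matrix.mulVec, Fin.sum_univ_succ]
        ring
      rw [this]
      nlinarith [sq_nonneg (w 0 + w 1), sq_nonneg (w 0 - w 1)]

lemma four_psd {a b c e : ℝ} (h1 : 0 ≤ a + b) (h2 : 0 ≤ a - b) (h3 : 0 ≤ c + e)
    (h4 : 0 ≤ c - e) :
    (!![a,b,0,0; b,a,0,0; 0,0,c,e; 0,0,e,c] : Matrix (Fin 4) (Fin 4) ℝ).PosSemidef := by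
  rw [Matrix.posSemidef_iff_dotProduct_mulVec]
  constructor
  · ext i j
    fin_cases i <;> fin_cases j <;>
      simp [Matrix.conjTranspose_apply, Matrix.vecHead, Matrix.vecTail]
  · intro w
    have : (star w) ⬝ᵥ (!![a,b,0,0; b,a,0,0; 0,0,c,e; 0,0,e,c] : Matrix (Fin 4) (Fin 4) ℝ) *ᵥ w
        = a * (w 0 * w 0) + b * (w 0 * w 1) + b * (w 1 * w 0) + a * (w 1 * w 1)
          + (c * (w 2 * w 2) + e * (w 2 * w 3) + e * (w 3 * w 2) + c * (w 3 * w 3)) := by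
      simp [dotProduct, Matrix.mulVec, Fin.sum_univ_succ,
        show (Fin.succ 2 : Fin 4) = 3 from rfl]
      ring
    rw [this]
    nlinarith [sq_nonneg (w 0 + w 1), sq_nonneg (w 0 - w 1), sq_nonneg (w 2 + w 3),
      sq_nonneg (w 2 - w 3)]

lemma four_psd_extract {a b c e p q : ℝ}
    (h : (!![a,b,p,q; b,a,q,p; p,q,c,e; q,p,e,c] : Matrix (Fin 4) (Fin 4) ℝ).PosSemidef) :
    (0 ≤ a + b ∧ 0 ≤ a - b) ∧ (0 ≤ c + e ∧ 0 ≤ c - e) := by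
  have h1 := h.dotProduct_mulVec_nonneg ![1, 1, 0, 0]
  have h2 := h.dotProduct_mulVec_nonneg ![1, -1, 0, 0]
  have h3 := h.dotProduct_mulVec_nonneg ![0, 0, 1, 1]
  have h4 := h.dotProduct_mulVec_nonneg ![0, 0, 1, -1]
  simp [dotProduct, Matrix.mulVec, Fin.sum_univ_succ] at h1 h2 h3 h4
  exact ⟨⟨by linarith, by linarith⟩, ⟨by linarith, by linarith⟩⟩

lemma minkowski_tilde_left {d : ℕ} (x y : Fin (d+1) → ℝ) :
    minkowski (tilde x) y = ∑ i, x i * y i := by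
  have h : ∀ i : Fin d, tilde x i.castSucc = x i.castSucc :=
    fun i => if_neg (Fin.castSucc_lt_last i).ne
  rw [minkowski, Finset.sum_congr rfl (fun i _ => by rw [h i]),
    show tilde x (Fin.last d) = -x (Fin.last d) from if_pos rfl, Fin.sum_univ_castSucc]
  ring

lemma vmat_psd_iff {d : ℕ} (x : Fin (d+1) → ℝ) (v : ℝ) :
    (Vmat x v).PosSemidef ↔
      0 ≤ (v - ∑ i, x i * x i) + (-1 - minkowski x x) ∧
      0 ≤ (v - ∑ i, x i * x i) - (-1 - minkowski x x) := by
  rw [Vmat,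
    show (Matrix.of fun i j => ![x, tilde x] j i)
      = (Matrix.of fun i j => ![x, tilde x] i j)ᵀ from rfl,
    block_psd_iff]
  have heq : !![v, -1; -1, v] -
      (Matrix.of fun i j => ![x, tilde x] i j) * (Matrix.of fun i j => ![x, tilde x] i j)ᵀ
      = !![v - ∑ i, x i * x i, -1 - minkowski x x;
           -1 - minkowski x x, v - ∑ i, x i * x i] := by
    ext i j
    fin_cases i <;> fin_cases j <;>
      simp [Matrix.mul_apply, dot_tilde, tilde_dot, tilde_dot_tilde, minkowski_tilde_left,
        Matrix.vecHead, Matrix.vecTail]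
  rw [heq, two_psd_iff]

lemma qmat_psd_iff {d : ℕ} (xn xm : Fin (d+1) → ℝ) (vn vm f l : ℝ) :
    (Qmat xn xm vn vm f l).PosSemidef ↔
      (!![vn - ∑ i, xn i * xn i, -1 - minkowski xn xn,
            f - ∑ i, xn i * xm i, l - minkowski xn xm;
          -1 - minkowski xn xn, vn - ∑ i, xn i * xn i,
            l - minkowski xn xm, f - ∑ i, xn i * xm i;
          f - ∑ i, xn i * xm i, l - minkowski xn xm,
            vm - ∑ i, xm i * xm i, -1 - minkowski xm xm;
          l - minkowski xn xm, f - ∑ i, xn i * xm i,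
            -1 - minkowski xm xm, vm - ∑ i, xm i * xm i] :
        Matrix (Fin 4) (Fin 4) ℝ).PosSemidef := by
  rw [Qmat,
    show (Matrix.of fun i j => ![xn, tilde xn, xm, tilde xm] j i)
      = (Matrix.of fun i j => ![xn, tilde xn, xm, tilde xm] i j)ᵀ from rfl,
    block_psd_iff]
  have hs : ∑ i, xm i * xn i = ∑ i, xn i * xm i :=
    Finset.sum_congr rfl fun i _ => mul_comm _ _
  have heq : !![vn, -1, f, l; -1, vn, l, f; f, l, vm, -1; l, f, -1, vm] -
      (Matrix.of fun i j => ![xn, tilde xn, xm, tilde xm] i j) *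
        (Matrix.of fun i j => ![xn, tilde xn, xm, tilde xm] i j)ᵀ
      = !![vn - ∑ i, xn i * xn i, -1 - minkowski xn xn,
            f - ∑ i, xn i * xm i, l - minkowski xn xm;
          -1 - minkowski xn xn, vn - ∑ i, xn i * xn i,
            l - minkowski xn xm, f - ∑ i, xn i * xm i;
          f - ∑ i, xn i * xm i, l - minkowski xn xm,
            vm - ∑ i, xm i * xm i, -1 - minkowski xm xm;
          l - minkowski xn xm, f - ∑ i, xn i * xm i,
            -1 - minkowski xm xm, vm - ∑ i, xm i * xm i] := by
    ext i j
    fin_cases i <;> fin_cases j <;>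
      simp [Matrix.mul_apply, dot_tilde, tilde_dot, tilde_dot_tilde, minkowski_tilde_left,
        Matrix.vecHead, Matrix.vecTail, hs, minkowski_comm xm xn]
  rw [heq]

lemma qmat_psd_of_good {d : ℕ} {xn xm : Fin (d+1) → ℝ} {vn vm : ℝ}
    (hn : (Vmat xn vn).PosSemidef) (hm : (Vmat xm vm).PosSemidef) :
    (Qmat xn xm vn vm (∑ i, xn i * xm i) (minkowski xn xm)).PosSemidef := by
  rw [vmat_psd_iff] at hn hm
  rw [qmat_psd_iff]
  simp only [sub_self]
  exact four_psd hn.1 hn.2 hm.1 hm.2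

lemma good_of_qmat_psd {d : ℕ} {xn xm : Fin (d+1) → ℝ} {vn vm f l : ℝ}
    (h : (Qmat xn xm vn vm f l).PosSemidef) :
    (Vmat xn vn).PosSemidef ∧ (Vmat xm vm).PosSemidef := by
  rw [qmat_psd_iff] at h
  have := four_psd_extract h
  rw [vmat_psd_iff, vmat_psd_iff]
  exact this

lemma feasV_of_feasQ {N d : ℕ} {E : Finset (Fin N × Fin N)}
    {x : Fin N → Fin (d+1) → ℝ} {l f : Fin N × Fin N → ℝ} {v : Fin N → ℝ}
    (hconn : ∀ n : Fin N, ∃ m : Fin N, (n, m) ∈ E ∨ (m, n) ∈ E)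
    (h : FeasQ E x l f v) : FeasV x v := by
  refine ⟨h.1, fun n => ?_⟩
  obtain ⟨m, hm | hm⟩ := hconn n
  · exact (good_of_qmat_psd (h.2 (n, m) hm)).1
  · exact (good_of_qmat_psd (h.2 (m, n) hm)).2

lemma feasQ_of_feasV {N d : ℕ} {E : Finset (Fin N × Fin N)}
    {x : Fin N → Fin (d+1) → ℝ} {v : Fin N → ℝ} (h : FeasV x v) :
    FeasQ E x (fun e => minkowski (x e.1) (x e.2))
      (fun e => ∑ i, x e.1 i * x e.2 i) v :=
  ⟨h.1, fun e _ => qmat_psd_of_good (h.2 e.1) (h.2 e.2)⟩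

/-- Equivalence of the two convex relaxations of the TV model:
(i) any minimizer `(x̂, ℓ̂, f̂, v̂)` of `K` over the edge-based feasible set yields a
minimizer `(x̂, v̂)` of `K` over the vertex-based feasible set;
(ii) conversely, any minimizer `(x̂, v̂)` of the vertex-based problem yields the
minimizer `(x̂, (η(x̂_n,x̂_m))_e, (⟨x̂_n,x̂_m⟩)_e, v̂)` of the edge-based problem.
Here every vertex is assumed to lie on an edge (`G` connected). -/
theorem relaxed_TV_models_equivalent (N d : ℕ) (E : Finset (Fin N × Fin N))
    (y : Fin N → Fin (d+1) → ℝ) (mu : ℝ) (hmu : 0 < mu)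
    (hconn : ∀ n : Fin N, ∃ m : Fin N, (n, m) ∈ E ∨ (m, n) ∈ E) :
    (∀ (xh : Fin N → Fin (d+1) → ℝ) (lh fh : Fin N × Fin N → ℝ) (vh : Fin N → ℝ),
      (FeasQ E xh lh fh vh ∧
        ∀ x l f v, FeasQ E x l f v → Kfun E y mu xh vh ≤ Kfun E y mu x v) →
      (FeasV xh vh ∧ ∀ x v, FeasV x v → Kfun E y mu xh vh ≤ Kfun E y mu x v)) ∧
    (∀ (xh : Fin N → Fin (d+1) → ℝ) (vh : Fin N → ℝ),
      (FeasV xh vh ∧ ∀ x v, FeasV x v → Kfun E y mu xh vh ≤ Kfun E y mu x v) →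
      (FeasQ E xh (fun e => minkowski (xh e.1) (xh e.2))
          (fun e => ∑ i, xh e.1 i * xh e.2 i) vh ∧
        ∀ x l f v, FeasQ E x l f v → Kfun E y mu xh vh ≤ Kfun E y mu x v)) := by
  
  constructor
  · rintro xh lh fh vh ⟨hfeas, hmin⟩
    refine ⟨feasV_of_feasQ hconn hfeas, fun x v hxv => ?_⟩
    exact hmin x (fun e => minkowski (x e.1) (x e.2))
      (fun e => ∑ i, x e.1 i * x e.2 i) v (feasQ_of_feasV hxv)
  · rintro xh vh ⟨hfeas, hmin⟩
    exact ⟨feasQ_of_feasV hfeas, fun x l f v hf => hmin x v (feasV_of_feasQ hconn hf)⟩
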